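/- Consistency of the third-order Kelvin theorem with the Taylor–Proudman theorem in ℝ⁴: let λ₁, λ₂ ∈ ℝ with λ₁ ≠ 0 and λ₂ ≠ 0, let u : ℝ⁴ → ℝ⁴ be continuously differentiable and Π : ℝ⁴ → ℝ twice continuously differentiable such that 2(−λ₁ u₂(x), λ₁ u₁(x), −λ₂ u₄(x), λ₂ u₃(x)) = −∇Π(x) for all x ∈ ℝ⁴. Then the dominant condition arising from the third-order Kelvin theorem, namely the vanishing of d ι_u (Ω_R ∧ Ω_R), holds: Σ_{i=1}^{4} u_{i,i} = 0 everywhere. -/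

import Mathlib

/-- The partial derivative `∂ᵢ f` of a scalar function on `ℝ^n` at `x`. -/
noncomputable def pd {n : ℕ} (i : Fin n) (f : (Fin n → ℝ) → ℝ) (x : Fin n → ℝ) : ℝ :=
  fderiv ℝ f x (Pi.single i 1)

lemma pd_diff {n : ℕ} {f : (Fin n → ℝ) → ℝ} (hf : ContDiff ℝ 2 f) (j : Fin n) :
    Differentiable ℝ (pd j f) := by
  have h : ContDiff ℝ 1 (fderiv ℝ f) := hf.fderiv_right (by norm_num)
  have hd : Differentiable ℝ (fderiv ℝ f) := h.differentiable (by norm_num)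
  exact (ContinuousLinearMap.apply ℝ ℝ (Pi.single j (1:ℝ))).differentiable.comp hd

lemma pd_symm {n : ℕ} {f : (Fin n → ℝ) → ℝ} (hf : ContDiff ℝ 2 f) (i j : Fin n)
    (x : Fin n → ℝ) : pd i (pd j f) x = pd j (pd i f) x := by
  have hdf : Differentiable ℝ (fderiv ℝ f) :=
    (hf.fderiv_right (m := 1) (by norm_num)).differentiable (by norm_num)
  have hf' : ∀ y, HasFDerivAt f (fderiv ℝ f y) y :=
    fun y => (hf.differentiable (by norm_num) y).hasFDerivAt
  have hx : HasFDerivAt (fderiv ℝ f) (fderiv ℝ (fderiv ℝ f) x) x := (hdf x).hasFDerivAt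
  have key : ∀ v w : Fin n → ℝ,
      fderiv ℝ (fun y => fderiv ℝ f y v) x w = fderiv ℝ (fderiv ℝ f) x w v := by
    intro v w
    have : HasFDerivAt (fun y => fderiv ℝ f y v)
        ((ContinuousLinearMap.apply ℝ ℝ v).comp (fderiv ℝ (fderiv ℝ f) x)) x :=
      ((ContinuousLinearMap.apply ℝ ℝ v).hasFDerivAt).comp x hx
    rw [this.fderiv]; rfl
  show fderiv ℝ (fun y => fderiv ℝ f y (Pi.single j 1)) x (Pi.single i 1) = _
  rw [key, second_derivative_symmetric hf' hx, ← key]; rfl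

lemma pd_const_mul {n : ℕ} (c : ℝ) {g : (Fin n → ℝ) → ℝ} {x : Fin n → ℝ}
    (hg : DifferentiableAt ℝ g x) (i : Fin n) :
    pd i (fun y => c * g y) x = c * pd i g x := by
  unfold pd
  rw [fderiv_const_mul hg]
  rfl

/-- Consistency of the third-order Kelvin theorem with the
Taylor–Proudman theorem in `ℝ⁴`: under the double-rotation geostrophic balance, the
dominant condition `d ι_u (Ω_R ∧ Ω_R) = 0`, i.e. the vanishing of the divergence of `u`,
holds everywhere (0-indexed coordinates). -/
theorem third_order_kelvin_consistency_R4
    (lam₁ lam₂ : ℝ) (h₁ : lam₁ ≠ 0) (h₂ : lam₂ ≠ 0)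
    (u : (Fin 4 → ℝ) → (Fin 4 → ℝ)) (hu : ContDiff ℝ 1 u)
    (Pr : (Fin 4 → ℝ) → ℝ) (hPr : ContDiff ℝ 2 Pr)
    (hbal : ∀ x : Fin 4 → ℝ,
      2 * (-lam₁ * u x 1) = -(pd 0 Pr x) ∧
      2 * (lam₁ * u x 0) = -(pd 1 Pr x) ∧
      2 * (-lam₂ * u x 3) = -(pd 2 Pr x) ∧
      2 * (lam₂ * u x 2) = -(pd 3 Pr x)) :
    ∀ x : Fin 4 → ℝ,
      pd 0 (fun y => u y 0) x + pd 1 (fun y => u y 1) x +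
        pd 2 (fun y => u y 2) x + pd 3 (fun y => u y 3) x = 0 := by
  intro x
  have e0 : (fun y => u y 0) = fun y => (-(2*lam₁)⁻¹) * pd 1 Pr y := by
    funext y; have := (hbal y).2.1; field_simp; linarith
  have e1 : (fun y => u y 1) = fun y => ((2*lam₁)⁻¹) * pd 0 Pr y := by
    funext y; have := (hbal y).1; field_simp; linarith
  have e2 : (fun y => u y 2) = fun y => (-(2*lam₂)⁻¹) * pd 3 Pr y := by
    funext y; have := (hbal y).2.2.2; field_simp; linarith
  have e3 : (fun y => u y 3) = fun y => ((2*lam₂)⁻¹) * pd 2 Pr y := by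
    funext y; have := (hbal y).2.2.1; field_simp; linarith
  rw [e0, e1, e2, e3,
    pd_const_mul _ ((pd_diff hPr 1) x) 0,
    pd_const_mul _ ((pd_diff hPr 0) x) 1,
    pd_const_mul _ ((pd_diff hPr 3) x) 2,
    pd_const_mul _ ((pd_diff hPr 2) x) 3,
    pd_symm hPr 0 1 x, pd_symm hPr 2 3 x]
  ring
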